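/- Let M be the space of real skew-symmetric n×n matrices with inner product ⟨A,B⟩ = (1/2)Tr(AB^T) (equivalently ∑_{i<j} a_{ij}b_{ij}), and let S_n act on M by ϱ(σ)A = P_σ A P_σ^T where P_σ is the permutation matrix of σ. Let h_inv be the skew-symmetric matrix with (h_inv)_{ij} = 1 for i<j. Then for every σ ∈ S_n, inv(σ) = n(n−1)/4 − (1/2)⟨ϱ(σ)h_inv, h_inv⟩. -/

import Mathlib

def descents (n : ℕ) (σ : Equiv.Perm (Fin n)) : Finset (Fin (n - 1)) :=
  Finset.univ.filter fun i =>
    σ ⟨i.1 + 1, by have := i.isLt; omega⟩ < σ ⟨i.1, by have := i.isLt; omega⟩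

def desStat (n : ℕ) (σ : Equiv.Perm (Fin n)) : ℕ := (descents n σ).card

def majStat (n : ℕ) (σ : Equiv.Perm (Fin n)) : ℕ := ∑ i ∈ descents n σ, (i.1 + 1)

def invStat (n : ℕ) (σ : Equiv.Perm (Fin n)) : ℕ :=
  (Finset.univ.filter fun p : Fin n × Fin n => p.1 < p.2 ∧ σ p.2 < σ p.1).card

def fixStat (n : ℕ) (σ : Equiv.Perm (Fin n)) : ℕ :=
  (Finset.univ.filter fun i : Fin n => σ i = i).card

/-- Inner product on skew-symmetric matrices: `∑_{i<j} a_{ij} b_{ij}`. -/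
def skewInner (n : ℕ) (A B : Matrix (Fin n) (Fin n) ℝ) : ℝ :=
  ∑ p ∈ Finset.univ.filter (fun p : Fin n × Fin n => p.1 < p.2), A p.1 p.2 * B p.1 p.2

/-- Action of `S_n` on matrices by simultaneous row and column permutation. -/
def rho (n : ℕ) (σ : Equiv.Perm (Fin n)) (A : Matrix (Fin n) (Fin n) ℝ) :
    Matrix (Fin n) (Fin n) ℝ :=
  fun i j => A (σ⁻¹ i) (σ⁻¹ j)

/-- The skew-symmetric matrix with `1` at every entry above the diagonal. -/
def hInv (n : ℕ) : Matrix (Fin n) (Fin n) ℝ :=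
  fun i j => if i < j then 1 else if j < i then -1 else 0

theorem inv_matrix_formula (n : ℕ) (σ : Equiv.Perm (Fin n)) :
    (invStat n σ : ℝ) =
      (n : ℝ) * (n - 1) / 4 - (1 / 2) * skewInner n (rho n σ (hInv n)) (hInv n) := by
  classical
  set S : Finset (Fin n × Fin n) := Finset.univ.filter (fun p => p.1 < p.2) with hS
  set c : Fin n × Fin n → Prop := fun p => σ⁻¹ p.1 < σ⁻¹ p.2 with hc
  -- rewrite skewInner
  have hterm : ∀ p ∈ S, rho n σ (hInv n) p.1 p.2 * hInv n p.1 p.2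
      = (if c p then (1:ℝ) else -1) := by
    intro p hp
    have hlt : p.1 < p.2 := by simpa [hS] using hp
    have hne : σ⁻¹ p.1 ≠ σ⁻¹ p.2 := by
      intro h
      exact absurd (σ⁻¹.injective h) (ne_of_lt hlt)
    simp only [rho, hInv, if_pos hlt]
    rcases lt_trichotomy (σ⁻¹ p.1) (σ⁻¹ p.2) with h | h | h
    · rw [Equiv.Perm.inv_def] at h; simp [hc, h, asymm h]
    · exact absurd h hne
    · rw [Equiv.Perm.inv_def] at h; simp [hc, h, asymm h, not_lt_of_gt h]
  have hsum : skewInner n (rho n σ (hInv n)) (hInv n)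
      = ((S.filter c).card : ℝ) - ((S.filter fun p => ¬ c p).card : ℝ) := by
    rw [skewInner, ← hS, Finset.sum_congr rfl hterm, Finset.sum_ite, Finset.sum_const,
      Finset.sum_const]
    simp [sub_eq_add_neg]
  -- the ¬c part is invStat
  have hb : (S.filter fun p => ¬ c p).card = invStat n σ := by
    rw [invStat]
    apply Finset.card_bij (fun p _ => (σ⁻¹ p.2, σ⁻¹ p.1))
    · intro p hp
      simp only [hS, hc, Finset.mem_filter, Finset.mem_univ, true_and] at hp ⊢
      obtain ⟨hlt, hnc⟩ := hp
      have hne : σ⁻¹ p.1 ≠ σ⁻¹ p.2 := fun h => absurd (σ⁻¹.injective h) (ne_of_lt hlt)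
      refine ⟨lt_of_le_of_ne (not_lt.mp hnc) (Ne.symm hne), ?_⟩
      simpa using hlt
    · intro p hp q hq h
      obtain ⟨h1, h2⟩ := Prod.mk.injEq .. ▸ h
      have := σ⁻¹.injective (Prod.ext_iff.mp h).1
      have := σ⁻¹.injective (Prod.ext_iff.mp h).2
      exact Prod.ext (by assumption) (by assumption)
    · intro q hq
      simp only [Finset.mem_filter, Finset.mem_univ, true_and] at hq
      refine ⟨(σ q.2, σ q.1), ?_, ?_⟩
      · simp only [hS, hc, Finset.mem_filter, Finset.mem_univ, true_and]
        exact ⟨hq.2, by simpa using not_lt_of_gt hq.1⟩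
      · simp
  -- total count
  have hsplit : (S.filter c).card + (S.filter fun p => ¬ c p).card = S.card :=
    Finset.card_filter_add_card_filter_not c
  -- card S
  have hScard : 2 * S.card + n = n * n := by
    have h1 : S.card + (Finset.univ.filter fun p : Fin n × Fin n => ¬ p.1 < p.2).card
        = n * n := by
      rw [hS, Finset.card_filter_add_card_filter_not]
      simp [Finset.card_univ]
    have h2 : (Finset.univ.filter fun p : Fin n × Fin n => ¬ p.1 < p.2)
        = (Finset.univ.filter fun p : Fin n × Fin n => p.2 < p.1)
          ∪ (Finset.univ.filter fun p : Fin n × Fin n => p.1 = p.2) := by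
      rw [← Finset.filter_or]
      apply Finset.filter_congr
      intro p _
      constructor
      · intro h
        rcases lt_or_eq_of_le (not_lt.mp h) with h' | h'
        · exact Or.inl h'
        · exact Or.inr h'.symm
      · rintro (h | h)
        · exact not_lt_of_gt h
        · simp [h]
    have hdisj : Disjoint (Finset.univ.filter fun p : Fin n × Fin n => p.2 < p.1)
        (Finset.univ.filter fun p : Fin n × Fin n => p.1 = p.2) := by
      rw [Finset.disjoint_filter]
      intro p _ h h'
      exact absurd h (h' ▸ lt_irrefl _)
    have hG : (Finset.univ.filter fun p : Fin n × Fin n => p.2 < p.1).card = S.card := by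
      rw [hS]
      apply Finset.card_bij (fun p _ => Prod.swap p)
      · intro p hp; simpa using (by simpa using hp : p.2 < p.1)
      · intro p _ q _ h; exact Prod.swap_injective h
      · intro q hq
        exact ⟨q.swap, by simpa using (by simpa using hq : q.1 < q.2), by simp⟩
    have hD : (Finset.univ.filter fun p : Fin n × Fin n => p.1 = p.2).card = n := by
      rw [show (Finset.univ.filter fun p : Fin n × Fin n => p.1 = p.2)
          = Finset.univ.image (fun i : Fin n => (i, i)) by
        ext p
        simp only [Finset.mem_filter, Finset.mem_univ, true_and, Finset.mem_image]
        constructor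
        · intro h; exact ⟨p.1, Prod.ext_iff.mpr ⟨rfl, h⟩⟩
        · rintro ⟨i, rfl⟩; rfl]
      rw [Finset.card_image_of_injective _ (fun a b h => (Prod.ext_iff.mp h).1)]
      simp
    rw [h2, Finset.card_union_of_disjoint hdisj, hG, hD] at h1
    omega
  -- finish
  rw [hsum]
  have hcast : ((S.filter c).card : ℝ) = (S.card : ℝ) - invStat n σ := by
    have := hsplit
    rw [hb] at this
    push_cast [← this]
    ring
  have hS2 : 2 * (S.card : ℝ) + n = n * n := by exact_mod_cast hScard
  rw [hcast]
  have hb' : ((S.filter fun p => ¬ c p).card : ℝ) = invStat n σ := by exact_mod_cast hb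
  rw [hb']
  nlinarith [hS2]
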